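/- Fix s₁ ≥ 0, s₂ ≤ 0, α > 0, β > 0, let g ∈ ℓ², and let g_n be any sequence supported in ℤ_n^d ∖ {0}. Let (u,v) be the unique minimizer of I(u,v) := ½|u|_{s₁}² + (α/2)‖u + v − g‖² + (β/2)|v|_{s₂}² with data g, and let (u_n, v_n) be the unique minimizer of the same functional with data g_n. Then |u − u_n|²_{s₁} + β |v_n − v|²_{s₂} + (α/2) ‖u_n + v_n − u − v‖² ≤ (α/2) ‖g − g_n‖². -/

import Mathlib

open scoped BigOperators
open Filter

noncomputable section

/-- Index set `ℤ^d \ {0}` of nonzero frequencies. -/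
abbrev K (d : ℕ) : Type := {k : Fin d → ℤ // k ≠ 0}

/-- Euclidean norm `|k|` of a frequency `k ∈ ℤ^d \ {0}`. -/
noncomputable def nrm {d : ℕ} (k : K d) : ℝ := Real.sqrt (∑ i : Fin d, ((k.1 i : ℝ)) ^ 2)

/-- Squared fractional Sobolev seminorm `|u|_s² = Σ_k |k|^{2s} |u_k|²`. -/
noncomputable def HnormSq {d : ℕ} (s : ℝ) (u : K d → ℂ) : ℝ :=
  ∑' k : K d, nrm k ^ (2 * s) * ‖u k‖ ^ 2

/-- `u ∈ ℓ²`, i.e. `‖u‖ = |u|_0 < ∞`. -/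
def MemL2 {d : ℕ} (u : K d → ℂ) : Prop := Summable fun k : K d => ‖u k‖ ^ 2

/-- `|u|_s < ∞`. -/
def MemHs {d : ℕ} (s : ℝ) (u : K d → ℂ) : Prop :=
  Summable fun k : K d => nrm k ^ (2 * s) * ‖u k‖ ^ 2

/-- Membership `k ∈ ℤ_n^d`, i.e. `−n/2 ≤ k_i ≤ n/2 − 1` for all `i`. -/
def inZn {d : ℕ} (n : ℕ) (k : K d) : Prop :=
  ∀ i : Fin d, -((n : ℤ) / 2) ≤ k.1 i ∧ k.1 i ≤ (n : ℤ) / 2 - 1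

instance {d : ℕ} (n : ℕ) (k : K d) : Decidable (inZn n k) := by
  unfold inZn; infer_instance

/-- Truncation `P_n v` of a sequence to the modes in `ℤ_n^d ∖ {0}`. -/
def trunc {d : ℕ} (n : ℕ) (v : K d → ℂ) : K d → ℂ :=
  fun k => if inZn n k then v k else 0

/- ===== auxiliary lemmas ===== -/

lemma one_le_nrm {d : ℕ} (k : K d) : 1 ≤ nrm k := by
  obtain ⟨f, hf⟩ := k
  have : ∃ i, f i ≠ 0 := by
    by_contra h; push_neg at h; exact hf (funext h)
  obtain ⟨i, hi⟩ := this
  have h1 : (1:ℝ) ≤ (f i : ℝ)^2 := by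
    have : (1:ℤ) ≤ f i ^ 2 := by
      rcases lt_or_gt_of_ne hi with h | h <;> nlinarith
    exact_mod_cast this
  have h2 : (1:ℝ) ≤ ∑ j : Fin d, ((f j : ℝ))^2 :=
    h1.trans (Finset.single_le_sum (f := fun j => ((f j:ℝ))^2) (fun j _ => sq_nonneg _)
      (Finset.mem_univ i))
  exact Real.one_le_sqrt.mpr h2

lemma nrm_rpow_nonneg {d : ℕ} (k : K d) (s : ℝ) : 0 ≤ nrm k ^ s :=
  Real.rpow_nonneg (le_trans zero_le_one (one_le_nrm k)) s

lemma normsq_complex (z : ℂ) : ‖z‖^2 = z.re^2 + z.im^2 := by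
  rw [Complex.sq_norm, Complex.normSq_apply]; ring

lemma memL2_add {d : ℕ} {u v : K d → ℂ} (hu : MemL2 u) (hv : MemL2 v) :
    MemL2 (fun k => u k + v k) := by
  refine Summable.of_nonneg_of_le (fun k => sq_nonneg _) (fun k => ?_)
    ((hu.add hv).mul_left 2)
  have h := norm_add_le (u k) (v k)
  nlinarith [norm_nonneg (u k), norm_nonneg (v k), norm_nonneg (u k + v k),
    sq_nonneg (‖u k‖ - ‖v k‖)]

lemma memL2_neg {d : ℕ} {u : K d → ℂ} (hu : MemL2 u) : MemL2 (fun k => -u k) := by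
  simpa [MemL2] using hu

lemma memL2_sub {d : ℕ} {u v : K d → ℂ} (hu : MemL2 u) (hv : MemL2 v) :
    MemL2 (fun k => u k - v k) := by
  have := memL2_add hu (memL2_neg hv)
  simpa [sub_eq_add_neg] using this

/-- `MemHs s₂` is automatic for `s₂ ≤ 0` and `ℓ²` sequences. -/
lemma memHs_of_nonpos {d : ℕ} {s : ℝ} (hs : s ≤ 0) {v : K d → ℂ} (hv : MemL2 v) :
    MemHs s v := by
  refine Summable.of_nonneg_of_le
    (fun k => mul_nonneg (nrm_rpow_nonneg k _) (sq_nonneg _)) (fun k => ?_) hv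
  have h1 : nrm k ^ (2*s) ≤ 1 :=
    Real.rpow_le_one_of_one_le_of_nonpos (one_le_nrm k) (by linarith : 2*s ≤ 0)
  nlinarith [sq_nonneg ‖v k‖, nrm_rpow_nonneg k (2*s)]

/-- from `0 ≤ p x + q y + C (x²+y²)` for all `x y`, conclude `p = q = 0`. -/
lemma quad_zero (p q C : ℝ) (hC : 0 < C) (h : ∀ x y : ℝ, 0 ≤ p*x + q*y + C*(x^2+y^2)) :
    p = 0 ∧ q = 0 := by
  have h1 := h (-(p/(2*C))) (-(q/(2*C)))
  have e : p*(-(p/(2*C))) + q*(-(q/(2*C))) + C*((-(p/(2*C)))^2+(-(q/(2*C)))^2)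
      = -(p^2+q^2)/(4*C) := by field_simp; ring
  rw [e] at h1
  have h2 : p^2 + q^2 ≤ 0 := by
    by_contra hcon
    push_neg at hcon
    have : -(p^2+q^2)/(4*C) < 0 := div_neg_of_neg_of_pos (by linarith) (by linarith)
    linarith
  constructor <;> nlinarith [sq_nonneg p, sq_nonneg q]

/-- the key variational lemma at a single mode. -/
lemma variational (r ρ : ℝ) (hr : 0 ≤ r) (hρ : 0 < ρ) (a e : ℂ)
    (h : ∀ c : ℂ, 0 ≤ (r/2)*(‖a+c‖^2 - ‖a‖^2) + (ρ/2)*(‖e+c‖^2 - ‖e‖^2)) :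
    (r:ℂ)*a + (ρ:ℂ)*e = 0 := by
  have key : ∀ x y : ℝ, 0 ≤ (r*a.re + ρ*e.re)*x + (r*a.im + ρ*e.im)*y
      + ((r+ρ)/2)*(x^2+y^2) := by
    intro x y
    have := h (↑x + ↑y*Complex.I)
    rw [normsq_complex, normsq_complex, normsq_complex, normsq_complex] at this
    simp only [Complex.add_re, Complex.add_im, Complex.mul_re, Complex.mul_im,
      Complex.ofReal_re, Complex.ofReal_im, Complex.I_re, Complex.I_im] at this
    nlinarith [this]
  obtain ⟨hp, hq⟩ := quad_zero _ _ _ (by linarith) key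
  apply Complex.ext
  · simp only [Complex.add_re, Complex.mul_re, Complex.ofReal_re, Complex.ofReal_im,
      Complex.zero_re]
    nlinarith [hp]
  · simp only [Complex.add_im, Complex.mul_im, Complex.ofReal_re, Complex.ofReal_im,
      Complex.zero_im]
    nlinarith [hq]

/-- tsum after updating a summable function at one point. -/
lemma tsum_update {d : ℕ} (f : K d → ℝ) (hf : Summable f) (k₀ : K d) (a : ℝ) :
    ∑' k, Function.update f k₀ a k = (∑' k, f k) - f k₀ + a := by
  classical
  rw [Summable.tsum_eq_add_tsum_ite (hf.update k₀ a) k₀, Summable.tsum_eq_add_tsum_ite hf k₀]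
  have h1 : Function.update f k₀ a k₀ = a := Function.update_self _ _ _
  have h2 : (∑' k, if k = k₀ then 0 else Function.update f k₀ a k)
      = ∑' k, if k = k₀ then 0 else f k := by
    congr 1; funext k
    by_cases hk : k = k₀ <;> simp [hk, Function.update_of_ne]
  rw [h1, h2]; ring

/-- Euler–Lagrange equations for the minimizer. -/
lemma euler {d : ℕ} (s₁ s₂ α β : ℝ) (hs₂ : s₂ ≤ 0) (hα : 0 < α) (hβ : 0 < β)
    (g u v : K d → ℂ) (hg : MemL2 g) (hu2 : MemL2 u) (hus : MemHs s₁ u) (hv2 : MemL2 v)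
    (hmin : ∀ w z : K d → ℂ, MemL2 w → MemHs s₁ w → MemL2 z →
      (1 / 2) * HnormSq s₁ u + (α / 2) * (∑' k : K d, ‖u k + v k - g k‖ ^ 2) +
          (β / 2) * HnormSq s₂ v
        ≤ (1 / 2) * HnormSq s₁ w + (α / 2) * (∑' k : K d, ‖w k + z k - g k‖ ^ 2) +
          (β / 2) * HnormSq s₂ z) (k₀ : K d) :
    ((nrm k₀ ^ (2*s₁) : ℝ) : ℂ) * u k₀ + (α:ℂ) * (u k₀ + v k₀ - g k₀) = 0 ∧
    ((β * nrm k₀ ^ (2*s₂) : ℝ) : ℂ) * v k₀ + (α:ℂ) * (u k₀ + v k₀ - g k₀) = 0 := by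
  classical
  have hT : Summable fun k : K d => ‖u k + v k - g k‖^2 := by
    have := memL2_sub (memL2_add hu2 hv2) hg
    simpa [MemL2, add_sub_assoc] using this
  have hvs : MemHs s₂ v := memHs_of_nonpos hs₂ hv2
  constructor
  · -- perturb u
    apply variational _ _ (nrm_rpow_nonneg k₀ _) hα
    intro c
    set w : K d → ℂ := Function.update u k₀ (u k₀ + c) with hw
    have hw2 : MemL2 w := by
      have : (fun k => ‖w k‖^2) = Function.update (fun k => ‖u k‖^2) k₀ (‖u k₀ + c‖^2) := by
        funext k; simp only [hw, Function.update_apply]; split_ifs with h <;> simp [h]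
      rw [MemL2, this]; exact hu2.update _ _
    have hws : MemHs s₁ w := by
      have : (fun k => nrm k ^ (2*s₁) * ‖w k‖^2)
          = Function.update (fun k => nrm k ^ (2*s₁) * ‖u k‖^2) k₀
            (nrm k₀ ^ (2*s₁) * ‖u k₀ + c‖^2) := by
        funext k; simp only [hw, Function.update_apply]; split_ifs with h <;> simp [h]
      rw [MemHs, this]; exact hus.update _ _
    have hle := hmin w v hw2 hws hv2
    have e1 : HnormSq s₁ w = HnormSq s₁ u - nrm k₀ ^ (2*s₁) * ‖u k₀‖^2
        + nrm k₀ ^ (2*s₁) * ‖u k₀ + c‖^2 := by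
      have : (fun k => nrm k ^ (2*s₁) * ‖w k‖^2)
          = Function.update (fun k => nrm k ^ (2*s₁) * ‖u k‖^2) k₀
            (nrm k₀ ^ (2*s₁) * ‖u k₀ + c‖^2) := by
        funext k; simp only [hw, Function.update_apply]; split_ifs with h <;> simp [h]
      rw [HnormSq, this, tsum_update _ hus k₀]; rfl
    have e2 : (∑' k : K d, ‖w k + v k - g k‖^2)
        = (∑' k : K d, ‖u k + v k - g k‖^2) - ‖u k₀ + v k₀ - g k₀‖^2
          + ‖u k₀ + c + v k₀ - g k₀‖^2 := by
      have : (fun k => ‖w k + v k - g k‖^2)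
          = Function.update (fun k => ‖u k + v k - g k‖^2) k₀
            (‖u k₀ + c + v k₀ - g k₀‖^2) := by
        funext k; simp only [hw, Function.update_apply]; split_ifs with h <;> simp [h]
      rw [this, tsum_update _ hT k₀]
    rw [e1, e2] at hle
    have : u k₀ + v k₀ - g k₀ + c = u k₀ + c + v k₀ - g k₀ := by ring
    rw [this]
    linarith
  · -- perturb v
    have hβt : 0 ≤ β * nrm k₀ ^ (2*s₂) := mul_nonneg hβ.le (nrm_rpow_nonneg k₀ _)
    apply variational _ _ hβt hα
    intro c
    set z : K d → ℂ := Function.update v k₀ (v k₀ + c) with hz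
    have hz2 : MemL2 z := by
      have : (fun k => ‖z k‖^2) = Function.update (fun k => ‖v k‖^2) k₀ (‖v k₀ + c‖^2) := by
        funext k; simp only [hz, Function.update_apply]; split_ifs with h <;> simp [h]
      rw [MemL2, this]; exact hv2.update _ _
    have hle := hmin u z hu2 hus hz2
    have e1 : HnormSq s₂ z = HnormSq s₂ v - nrm k₀ ^ (2*s₂) * ‖v k₀‖^2
        + nrm k₀ ^ (2*s₂) * ‖v k₀ + c‖^2 := by
      have : (fun k => nrm k ^ (2*s₂) * ‖z k‖^2)
          = Function.update (fun k => nrm k ^ (2*s₂) * ‖v k‖^2) k₀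
            (nrm k₀ ^ (2*s₂) * ‖v k₀ + c‖^2) := by
        funext k; simp only [hz, Function.update_apply]; split_ifs with h <;> simp [h]
      rw [HnormSq, this, tsum_update _ hvs k₀]; rfl
    have e2 : (∑' k : K d, ‖u k + z k - g k‖^2)
        = (∑' k : K d, ‖u k + v k - g k‖^2) - ‖u k₀ + v k₀ - g k₀‖^2
          + ‖u k₀ + (v k₀ + c) - g k₀‖^2 := by
      have : (fun k => ‖u k + z k - g k‖^2)
          = Function.update (fun k => ‖u k + v k - g k‖^2) k₀
            (‖u k₀ + (v k₀ + c) - g k₀‖^2) := by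
        funext k; simp only [hz, Function.update_apply]; split_ifs with h <;> simp [h]
      rw [this, tsum_update _ hT k₀]
    rw [e1, e2] at hle
    have hc1 : v k₀ + c = v k₀ + c := rfl
    have : u k₀ + v k₀ - g k₀ + c = u k₀ + (v k₀ + c) - g k₀ := by ring
    rw [this]
    linarith

/-- pointwise estimate from the subtracted Euler–Lagrange equations. -/
lemma perk (r t ρ : ℝ) (hρ : 0 < ρ) (U V G : ℂ)
    (h1 : (r:ℂ)*U + (ρ:ℂ)*(U + V - G) = 0)
    (h2 : (t:ℂ)*V + (ρ:ℂ)*(U + V - G) = 0) :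
    r*‖U‖^2 + t*‖V‖^2 + (ρ/2)*‖U+V‖^2 ≤ (ρ/2)*‖G‖^2 := by
  have h1re := congrArg Complex.re h1
  have h1im := congrArg Complex.im h1
  have h2re := congrArg Complex.re h2
  have h2im := congrArg Complex.im h2
  simp only [Complex.add_re, Complex.add_im, Complex.sub_re, Complex.sub_im,
    Complex.mul_re, Complex.mul_im, Complex.ofReal_re, Complex.ofReal_im,
    Complex.zero_re, Complex.zero_im] at h1re h1im h2re h2im
  rw [normsq_complex, normsq_complex, normsq_complex, normsq_complex]
  simp only [Complex.add_re, Complex.add_im]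
  have k1 : r*(U.re*U.re) + ρ*((U.re+V.re-G.re)*U.re) = 0 := by linear_combination U.re * h1re
  have k2 : r*(U.im*U.im) + ρ*((U.im+V.im-G.im)*U.im) = 0 := by linear_combination U.im * h1im
  have k3 : t*(V.re*V.re) + ρ*((U.re+V.re-G.re)*V.re) = 0 := by linear_combination V.re * h2re
  have k4 : t*(V.im*V.im) + ρ*((U.im+V.im-G.im)*V.im) = 0 := by linear_combination V.im * h2im
  nlinarith [k1, k2, k3, k4, mul_nonneg hρ.le (sq_nonneg (U.re+V.re-G.re)),
    mul_nonneg hρ.le (sq_nonneg (U.im+V.im-G.im))]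

lemma gn_memL2 {d : ℕ} (n : ℕ) (gn : K d → ℂ) (hgn : ∀ k : K d, ¬ inZn n k → gn k = 0) :
    MemL2 gn := by
  classical
  apply summable_of_finite_support
  have hS : ({k : K d | inZn n k} : Set (K d)).Finite := by
    have hbox : (Set.pi Set.univ (fun _ : Fin d =>
        Set.Icc (-((n:ℤ)/2)) ((n:ℤ)/2 - 1))).Finite :=
      Set.Finite.pi (fun _ => Set.finite_Icc _ _)
    have : {k : K d | inZn n k} ⊆ Subtype.val ⁻¹'
        (Set.pi Set.univ (fun _ : Fin d => Set.Icc (-((n:ℤ)/2)) ((n:ℤ)/2 - 1))) := by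
      intro k hk
      simp only [Set.mem_preimage, Set.mem_pi, Set.mem_univ, forall_true_left, Set.mem_Icc]
      intro i
      exact ⟨(hk i).1, (hk i).2⟩
    exact Set.Finite.subset (Set.Finite.preimage (Subtype.val_injective.injOn) hbox) this
  apply hS.subset
  intro k hk
  simp only [Function.mem_support] at hk
  by_contra hmem
  exact hk (by simp [hgn k hmem])

/-- error estimate between the minimizer `(u,v)` of the decomposition functional
with data `g` and the minimizer `(u_n,v_n)` with data `g_n` supported in `ℤ_n^d ∖ {0}`:
`|u−u_n|²_{s₁} + β|v_n−v|²_{s₂} + (α/2)‖u_n+v_n−u−v‖² ≤ (α/2)‖g−g_n‖²`. -/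
theorem stmt_15 (d : ℕ) (hd : 1 ≤ d)
    (s₁ s₂ α β : ℝ) (hs₁ : 0 ≤ s₁) (hs₂ : s₂ ≤ 0) (hα : 0 < α) (hβ : 0 < β)
    (g : K d → ℂ) (hg : MemL2 g)
    (n : ℕ) (hne : Even n) (gn : K d → ℂ)
    (hgn : ∀ k : K d, ¬ inZn n k → gn k = 0)
    (u v un vn : K d → ℂ)
    (hu2 : MemL2 u) (hus : MemHs s₁ u) (hv2 : MemL2 v)
    (hmin : ∀ w z : K d → ℂ, MemL2 w → MemHs s₁ w → MemL2 z →
      (1 / 2) * HnormSq s₁ u + (α / 2) * (∑' k : K d, ‖u k + v k - g k‖ ^ 2) +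
          (β / 2) * HnormSq s₂ v
        ≤ (1 / 2) * HnormSq s₁ w + (α / 2) * (∑' k : K d, ‖w k + z k - g k‖ ^ 2) +
          (β / 2) * HnormSq s₂ z)
    (hun2 : MemL2 un) (huns : MemHs s₁ un) (hvn2 : MemL2 vn)
    (hminn : ∀ w z : K d → ℂ, MemL2 w → MemHs s₁ w → MemL2 z →
      (1 / 2) * HnormSq s₁ un + (α / 2) * (∑' k : K d, ‖un k + vn k - gn k‖ ^ 2) +
          (β / 2) * HnormSq s₂ vn
        ≤ (1 / 2) * HnormSq s₁ w + (α / 2) * (∑' k : K d, ‖w k + z k - gn k‖ ^ 2) +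
          (β / 2) * HnormSq s₂ z) :
    HnormSq s₁ (u - un) + β * HnormSq s₂ (vn - v) +
        (α / 2) * (∑' k : K d, ‖un k + vn k - u k - v k‖ ^ 2)
      ≤ (α / 2) * (∑' k : K d, ‖g k - gn k‖ ^ 2) := by
  classical
  have hgn2 : MemL2 gn := gn_memL2 n gn hgn
  have EL := euler s₁ s₂ α β hs₂ hα hβ g u v hg hu2 hus hv2 hmin
  have ELn := euler s₁ s₂ α β hs₂ hα hβ gn un vn hgn2 hun2 huns hvn2 hminn
  -- per-mode estimate
  set A : K d → ℝ := fun k => nrm k ^ (2*s₁) * ‖u k - un k‖^2 with hA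
  set B : K d → ℝ := fun k => β * (nrm k ^ (2*s₂) * ‖vn k - v k‖^2) with hB
  set C : K d → ℝ := fun k => (α/2) * ‖un k + vn k - u k - v k‖^2 with hC
  set R : K d → ℝ := fun k => (α/2) * ‖g k - gn k‖^2 with hR
  have hANN : ∀ k, 0 ≤ A k := fun k => mul_nonneg (nrm_rpow_nonneg k _) (sq_nonneg _)
  have hBNN : ∀ k, 0 ≤ B k :=
    fun k => mul_nonneg hβ.le (mul_nonneg (nrm_rpow_nonneg k _) (sq_nonneg _))
  have hCNN : ∀ k, 0 ≤ C k := fun k => mul_nonneg (by linarith) (sq_nonneg _)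
  have hkey : ∀ k, A k + B k + C k ≤ R k := by
    intro k
    have h1 : ((nrm k ^ (2*s₁) : ℝ):ℂ) * (u k - un k)
        + (α:ℂ)*((u k - un k) + (v k - vn k) - (g k - gn k)) = 0 := by
      linear_combination (EL k).1 - (ELn k).1
    have h2 : ((β * nrm k ^ (2*s₂) : ℝ):ℂ) * (v k - vn k)
        + (α:ℂ)*((u k - un k) + (v k - vn k) - (g k - gn k)) = 0 := by
      linear_combination (EL k).2 - (ELn k).2
    have hp := perk (nrm k ^ (2*s₁)) (β * nrm k ^ (2*s₂)) α hα
      (u k - un k) (v k - vn k) (g k - gn k) (by exact_mod_cast h1) (by exact_mod_cast h2)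
    have hv' : ‖vn k - v k‖ = ‖v k - vn k‖ := norm_sub_rev _ _
    have hw' : ‖un k + vn k - u k - v k‖ = ‖(u k - un k) + (v k - vn k)‖ := by
      rw [show un k + vn k - u k - v k = -((u k - un k) + (v k - vn k)) by ring, norm_neg]
    simp only [hA, hB, hC, hR, hv', hw']
    nlinarith [hp]
  have hR_sum : Summable R := (memL2_sub hg hgn2).mul_left (α/2)
  have hABC_sum : Summable (fun k => A k + B k + C k) :=
    Summable.of_nonneg_of_le
      (fun k => by have := hANN k; have := hBNN k; have := hCNN k; linarith) hkey hR_sum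
  have hA_sum : Summable A := Summable.of_nonneg_of_le hANN
    (fun k => by have := hBNN k; have := hCNN k; linarith) hABC_sum
  have hB_sum : Summable B := Summable.of_nonneg_of_le hBNN
    (fun k => by have := hANN k; have := hCNN k; linarith) hABC_sum
  have hC_sum : Summable C := Summable.of_nonneg_of_le hCNN
    (fun k => by have := hANN k; have := hBNN k; linarith) hABC_sum
  have htsum : (∑' k, A k) + (∑' k, B k) + (∑' k, C k) ≤ ∑' k, R k := by
    rw [← Summable.tsum_add hA_sum hB_sum, ← Summable.tsum_add (hA_sum.add hB_sum) hC_sum]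
    exact Summable.tsum_le_tsum hkey hABC_sum hR_sum
  have eA : HnormSq s₁ (u - un) = ∑' k, A k := by
    unfold HnormSq; congr 1
  have eB : β * HnormSq s₂ (vn - v) = ∑' k, B k := by
    unfold HnormSq
    rw [← tsum_mul_left]
    rfl
  have eC : (α/2) * (∑' k : K d, ‖un k + vn k - u k - v k‖ ^ 2) = ∑' k, C k := by
    rw [← tsum_mul_left]
  have eR : (α/2) * (∑' k : K d, ‖g k - gn k‖ ^ 2) = ∑' k, R k := by
    rw [← tsum_mul_left]
  rw [eA, eB, eC, eR]
  exact htsum
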